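/- (Full discrete convergence theorem) Under the hypotheses: A₁ symmetric positive definite with ⟨A₁w,w⟩ ≥ α₁β₁‖w_B‖_M², A₂ symmetric positive semidefinite, M symmetric positive definite, Ã_i = A_i + diag(0, M) invertible, and error recursions Ã₁ e₁^m = (0, M e_{2,B}^{m−1})ᵀ, Ã₂ e₂^m = (0, M e_{1,B}^m)ᵀ for m ≥ 1, there exists C > 0 such that ‖e_i^m‖ ≤ C r^{m+i−2} ‖e_{2,B}^0‖_M for i = 1,2 and all m ≥ 1, where r = 1/(1+α₁β₁) ∈ (0,1). -/

import Mathlib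

open Matrix

section aux
variable {ι κ : Type*} [Fintype ι] [Fintype κ]

lemma dotSelfNonneg (x : ι → ℝ) : 0 ≤ x ⬝ᵥ x :=
  Finset.sum_nonneg fun _ _ => mul_self_nonneg _

lemma dotCS (x y : ι → ℝ) : x ⬝ᵥ y ≤ Real.sqrt (x ⬝ᵥ x) * Real.sqrt (y ⬝ᵥ y) := by
  have h := Real.sum_mul_le_sqrt_mul_sqrt Finset.univ x y
  simpa [dotProduct, sq] using h

lemma frobBound (A : Matrix ι κ ℝ) (x : κ → ℝ) :
    Real.sqrt (A *ᵥ x ⬝ᵥ (A *ᵥ x)) ≤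
      Real.sqrt (∑ i, ∑ j, A i j ^ 2) * Real.sqrt (x ⬝ᵥ x) := by
  rw [← Real.sqrt_mul (show (0:ℝ) ≤ ∑ i, ∑ j, A i j ^ 2 from Finset.sum_nonneg fun i _ => Finset.sum_nonneg fun j _ => sq_nonneg _)]
  apply Real.sqrt_le_sqrt
  calc A *ᵥ x ⬝ᵥ (A *ᵥ x) = ∑ i, (∑ j, A i j * x j) ^ 2 := by
        simp [dotProduct, Matrix.mulVec, sq]
    _ ≤ ∑ i, (∑ j, A i j ^ 2) * (∑ j, x j ^ 2) :=
        Finset.sum_le_sum fun i _ => Finset.sum_mul_sq_le_sq_mul_sq _ _ _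
    _ = (∑ i, ∑ j, A i j ^ 2) * (x ⬝ᵥ x) := by
        rw [← Finset.sum_mul]; congr 1; simp [dotProduct, sq]

lemma transposeDot (A : Matrix κ ι ℝ) (u : κ → ℝ) (y : ι → ℝ) :
    Aᵀ *ᵥ u ⬝ᵥ y = u ⬝ᵥ (A *ᵥ y) := by
  rw [Matrix.mulVec_transpose, Matrix.dotProduct_mulVec]

lemma elimZeroDot (u : κ → ℝ) (v : ι ⊕ κ → ℝ) :
    Sum.elim (0 : ι → ℝ) u ⬝ᵥ v = u ⬝ᵥ (v ∘ Sum.inr) := by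
  nth_rewrite 1 [← Sum.elim_comp_inl_inr v]
  rw [sumElim_dotProduct_sumElim]
  simp

lemma fromBlocksQuad (M : Matrix κ κ ℝ) (v : ι ⊕ κ → ℝ) :
    Matrix.fromBlocks (0 : Matrix ι ι ℝ) 0 0 M *ᵥ v ⬝ᵥ v
      = M *ᵥ (v ∘ Sum.inr) ⬝ᵥ (v ∘ Sum.inr) := by
  calc Matrix.fromBlocks (0 : Matrix ι ι ℝ) 0 0 M *ᵥ v ⬝ᵥ v
      = Sum.elim (0 : ι → ℝ) (M *ᵥ (v ∘ Sum.inr)) ⬝ᵥ v := by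
        rw [Matrix.fromBlocks_mulVec]; simp
    _ = M *ᵥ (v ∘ Sum.inr) ⬝ᵥ (v ∘ Sum.inr) := elimZeroDot _ _

lemma auxStep (s t K : ℝ) (hs : 0 ≤ s) (ht : 0 ≤ t) (hK : 0 < K)
    (h : K * s ^ 2 ≤ t * s) : s ≤ (1 / K) * t := by
  rcases eq_or_lt_of_le hs with h0 | h0
  · rw [← h0]; positivity
  · have hks : K * s ≤ t := by nlinarith
    rw [one_div, inv_mul_eq_div, le_div_iff₀ hK]
    linarith

end aux

set_option maxHeartbeats 2000000 in
open Matrix in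
/-- Theorem 5.1: geometric convergence of the discrete Gauss–Seidel type
alternating iteration to the monolithic solution:
‖e_i^m‖ ≤ C r^{m+i−2} ‖e_{2,B}^0‖_M with r = 1/(1+α₁β₁). -/
theorem stmt12 {n1I n2I nB : ℕ}
    (A₁ : Matrix (Fin n1I ⊕ Fin nB) (Fin n1I ⊕ Fin nB) ℝ)
    (A₂ : Matrix (Fin n2I ⊕ Fin nB) (Fin n2I ⊕ Fin nB) ℝ)
    (M : Matrix (Fin nB) (Fin nB) ℝ)
    (hA₁ : A₁.PosDef) (hA₂ : A₂.PosSemidef) (hM : M.PosDef)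
    (α₁ β₁ : ℝ) (hα : 0 < α₁) (hβ : 0 < β₁)
    (hcoer : ∀ w : Fin n1I ⊕ Fin nB → ℝ,
      α₁ * β₁ * (M.mulVec (w ∘ Sum.inr) ⬝ᵥ (w ∘ Sum.inr)) ≤ A₁.mulVec w ⬝ᵥ w)
    (hinv1 : IsUnit (A₁ + Matrix.fromBlocks 0 0 0 M))
    (hinv2 : IsUnit (A₂ + Matrix.fromBlocks 0 0 0 M))
    (e₁ : ℕ → Fin n1I ⊕ Fin nB → ℝ) (e₂ : ℕ → Fin n2I ⊕ Fin nB → ℝ)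
    (hrec1 : ∀ m : ℕ, 1 ≤ m →
      (A₁ + Matrix.fromBlocks 0 0 0 M).mulVec (e₁ m)
        = Sum.elim (0 : Fin n1I → ℝ) (M.mulVec (e₂ (m - 1) ∘ Sum.inr)))
    (hrec2 : ∀ m : ℕ, 1 ≤ m →
      (A₂ + Matrix.fromBlocks 0 0 0 M).mulVec (e₂ m)
        = Sum.elim (0 : Fin n2I → ℝ) (M.mulVec (e₁ m ∘ Sum.inr))) :
    ∃ C > 0, ∀ m : ℕ, 1 ≤ m →
      Real.sqrt (e₁ m ⬝ᵥ e₁ m) ≤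
        C * (1 / (1 + α₁ * β₁)) ^ (m - 1) *
          Real.sqrt (M.mulVec (e₂ 0 ∘ Sum.inr) ⬝ᵥ (e₂ 0 ∘ Sum.inr)) ∧
      Real.sqrt (e₂ m ⬝ᵥ e₂ m) ≤
        C * (1 / (1 + α₁ * β₁)) ^ m *
          Real.sqrt (M.mulVec (e₂ 0 ∘ Sum.inr) ⬝ᵥ (e₂ 0 ∘ Sum.inr)) := by
  -- abbreviations
  set r : ℝ := 1 / (1 + α₁ * β₁) with hrdef
  have hK : (0:ℝ) < 1 + α₁ * β₁ := by positivity
  have hr0 : 0 < r := by rw [hrdef]; positivity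
  have hr1 : r ≤ 1 := by
    rw [hrdef, div_le_one hK]; nlinarith
  -- factor M = Bᵀ * B
  obtain ⟨B, hB⟩ : ∃ B : Matrix (Fin nB) (Fin nB) ℝ, M = Bᴴ * B := by
    open scoped MatrixOrder in
    exact ⟨_, (CStarAlgebra.nonneg_iff_eq_star_mul_self.mp hM.posSemidef.nonneg).choose_spec⟩
  have hBT : Bᴴ = Bᵀ := by ext i j; simp [Matrix.conjTranspose_apply]
  rw [hBT] at hB
  have hfact : ∀ x y : Fin nB → ℝ, M *ᵥ x ⬝ᵥ y = (B *ᵥ x) ⬝ᵥ (B *ᵥ y) := by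
    intro x y
    rw [hB, ← Matrix.mulVec_mulVec, transposeDot]
  have hqnonneg : ∀ x : Fin nB → ℝ, 0 ≤ M *ᵥ x ⬝ᵥ x := fun x => by
    rw [hfact]; exact dotSelfNonneg _
  have hMCS : ∀ x y : Fin nB → ℝ,
      M *ᵥ x ⬝ᵥ y ≤ Real.sqrt (M *ᵥ x ⬝ᵥ x) * Real.sqrt (M *ᵥ y ⬝ᵥ y) := by
    intro x y
    calc M *ᵥ x ⬝ᵥ y = (B *ᵥ x) ⬝ᵥ (B *ᵥ y) := hfact x y
      _ ≤ Real.sqrt ((B *ᵥ x) ⬝ᵥ (B *ᵥ x)) * Real.sqrt ((B *ᵥ y) ⬝ᵥ (B *ᵥ y)) := dotCS _ _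
      _ = Real.sqrt (M *ᵥ x ⬝ᵥ x) * Real.sqrt (M *ᵥ y ⬝ᵥ y) := by
          rw [hfact x x, hfact y y]
  set cB : ℝ := Real.sqrt (∑ i, ∑ j, Bᵀ i j ^ 2) with hcBdef
  have hcB : 0 ≤ cB := Real.sqrt_nonneg _
  have hMnorm : ∀ w : Fin nB → ℝ,
      Real.sqrt ((M *ᵥ w) ⬝ᵥ (M *ᵥ w)) ≤ cB * Real.sqrt (M *ᵥ w ⬝ᵥ w) := by
    intro w
    have h1 : M *ᵥ w = Bᵀ *ᵥ (B *ᵥ w) := by rw [hB, ← Matrix.mulVec_mulVec]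
    have key : Real.sqrt ((Bᵀ *ᵥ (B *ᵥ w)) ⬝ᵥ (Bᵀ *ᵥ (B *ᵥ w)))
        ≤ cB * Real.sqrt ((B *ᵥ w) ⬝ᵥ (B *ᵥ w)) := frobBound _ _
    rw [← h1, ← hfact w w] at key
    exact key
  -- inverses
  set F₁ : Matrix (Fin n1I ⊕ Fin nB) (Fin n1I ⊕ Fin nB) ℝ := Matrix.fromBlocks 0 0 0 M with hF₁
  set F₂ : Matrix (Fin n2I ⊕ Fin nB) (Fin n2I ⊕ Fin nB) ℝ := Matrix.fromBlocks 0 0 0 M with hF₂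
  have hN₁ : (A₁ + F₁)⁻¹ * (A₁ + F₁) = 1 :=
    Matrix.nonsing_inv_mul _ ((Matrix.isUnit_iff_isUnit_det _).mp hinv1)
  have hN₂ : (A₂ + F₂)⁻¹ * (A₂ + F₂) = 1 :=
    Matrix.nonsing_inv_mul _ ((Matrix.isUnit_iff_isUnit_det _).mp hinv2)
  set N₁ := (A₁ + F₁)⁻¹ with hN₁def
  set N₂ := (A₂ + F₂)⁻¹ with hN₂def
  have hsolve1 : ∀ m : ℕ, 1 ≤ m →
      e₁ m = N₁ *ᵥ Sum.elim (0 : Fin n1I → ℝ) (M *ᵥ (e₂ (m-1) ∘ Sum.inr)) := by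
    intro m hm
    rw [← hrec1 m hm, Matrix.mulVec_mulVec, hN₁, Matrix.one_mulVec]
  have hsolve2 : ∀ m : ℕ, 1 ≤ m →
      e₂ m = N₂ *ᵥ Sum.elim (0 : Fin n2I → ℝ) (M *ᵥ (e₁ m ∘ Sum.inr)) := by
    intro m hm
    rw [← hrec2 m hm, Matrix.mulVec_mulVec, hN₂, Matrix.one_mulVec]
  set cN1 : ℝ := Real.sqrt (∑ i, ∑ j, N₁ i j ^ 2) with hcN1def
  set cN2 : ℝ := Real.sqrt (∑ i, ∑ j, N₂ i j ^ 2) with hcN2def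
  have hcN1 : 0 ≤ cN1 := Real.sqrt_nonneg _
  have hcN2 : 0 ≤ cN2 := Real.sqrt_nonneg _
  -- full norm bounded by interface M-norm of data
  have hnb1 : ∀ m : ℕ, 1 ≤ m →
      Real.sqrt (e₁ m ⬝ᵥ e₁ m) ≤
        cN1 * cB * Real.sqrt (M *ᵥ (e₂ (m-1) ∘ Sum.inr) ⬝ᵥ (e₂ (m-1) ∘ Sum.inr)) := by
    intro m hm
    rw [hsolve1 m hm]
    set w := e₂ (m-1) ∘ Sum.inr with hw
    calc Real.sqrt ((N₁ *ᵥ Sum.elim 0 (M *ᵥ w)) ⬝ᵥ (N₁ *ᵥ Sum.elim 0 (M *ᵥ w)))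
        ≤ cN1 * Real.sqrt (Sum.elim (0 : Fin n1I → ℝ) (M *ᵥ w) ⬝ᵥ Sum.elim 0 (M *ᵥ w)) :=
          frobBound _ _
      _ = cN1 * Real.sqrt ((M *ᵥ w) ⬝ᵥ (M *ᵥ w)) := by rw [elimZeroDot]; simp
      _ ≤ cN1 * (cB * Real.sqrt (M *ᵥ w ⬝ᵥ w)) :=
          mul_le_mul_of_nonneg_left (hMnorm w) hcN1
      _ = cN1 * cB * Real.sqrt (M *ᵥ w ⬝ᵥ w) := (mul_assoc _ _ _).symm
  have hnb2 : ∀ m : ℕ, 1 ≤ m →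
      Real.sqrt (e₂ m ⬝ᵥ e₂ m) ≤
        cN2 * cB * Real.sqrt (M *ᵥ (e₁ m ∘ Sum.inr) ⬝ᵥ (e₁ m ∘ Sum.inr)) := by
    intro m hm
    rw [hsolve2 m hm]
    set w := e₁ m ∘ Sum.inr with hw
    calc Real.sqrt ((N₂ *ᵥ Sum.elim 0 (M *ᵥ w)) ⬝ᵥ (N₂ *ᵥ Sum.elim 0 (M *ᵥ w)))
        ≤ cN2 * Real.sqrt (Sum.elim (0 : Fin n2I → ℝ) (M *ᵥ w) ⬝ᵥ Sum.elim 0 (M *ᵥ w)) :=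
          frobBound _ _
      _ = cN2 * Real.sqrt ((M *ᵥ w) ⬝ᵥ (M *ᵥ w)) := by rw [elimZeroDot]; simp
      _ ≤ cN2 * (cB * Real.sqrt (M *ᵥ w ⬝ᵥ w)) :=
          mul_le_mul_of_nonneg_left (hMnorm w) hcN2
      _ = cN2 * cB * Real.sqrt (M *ᵥ w ⬝ᵥ w) := (mul_assoc _ _ _).symm
  -- energy contraction steps
  have hS1 : ∀ m : ℕ, 1 ≤ m →
      Real.sqrt (M *ᵥ (e₁ m ∘ Sum.inr) ⬝ᵥ (e₁ m ∘ Sum.inr)) ≤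
        r * Real.sqrt (M *ᵥ (e₂ (m-1) ∘ Sum.inr) ⬝ᵥ (e₂ (m-1) ∘ Sum.inr)) := by
    intro m hm
    set v := e₁ m with hv
    set w := e₂ (m-1) ∘ Sum.inr with hw
    have hid : A₁ *ᵥ v ⬝ᵥ v + M *ᵥ (v ∘ Sum.inr) ⬝ᵥ (v ∘ Sum.inr)
        = M *ᵥ w ⬝ᵥ (v ∘ Sum.inr) := by
      have h := congrArg (fun z => z ⬝ᵥ v) (hrec1 m hm)
      rw [Matrix.add_mulVec, add_dotProduct, hF₁, fromBlocksQuad, elimZeroDot] at h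
      exact h
    have hc := hcoer v
    have hineq : (1 + α₁ * β₁) * (Real.sqrt (M *ᵥ (v ∘ Sum.inr) ⬝ᵥ (v ∘ Sum.inr))) ^ 2
        ≤ Real.sqrt (M *ᵥ w ⬝ᵥ w) * Real.sqrt (M *ᵥ (v ∘ Sum.inr) ⬝ᵥ (v ∘ Sum.inr)) := by
      rw [Real.sq_sqrt (hqnonneg _)]
      have hcs := hMCS w (v ∘ Sum.inr)
      have hsq := Real.sq_sqrt (hqnonneg (v ∘ Sum.inr))
      nlinarith [hid, hc, hcs]
    have := auxStep _ _ _ (Real.sqrt_nonneg _) (Real.sqrt_nonneg _) hK hineq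
    rwa [hrdef]
  have hS2 : ∀ m : ℕ, 1 ≤ m →
      Real.sqrt (M *ᵥ (e₂ m ∘ Sum.inr) ⬝ᵥ (e₂ m ∘ Sum.inr)) ≤
        Real.sqrt (M *ᵥ (e₁ m ∘ Sum.inr) ⬝ᵥ (e₁ m ∘ Sum.inr)) := by
    intro m hm
    set v := e₂ m with hv
    set u := e₁ m ∘ Sum.inr with hu
    have hid : A₂ *ᵥ v ⬝ᵥ v + M *ᵥ (v ∘ Sum.inr) ⬝ᵥ (v ∘ Sum.inr)
        = M *ᵥ u ⬝ᵥ (v ∘ Sum.inr) := by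
      have h := congrArg (fun z => z ⬝ᵥ v) (hrec2 m hm)
      rw [Matrix.add_mulVec, add_dotProduct, hF₂, fromBlocksQuad, elimZeroDot] at h
      exact h
    have hpsd : 0 ≤ A₂ *ᵥ v ⬝ᵥ v := by
      have := hA₂.re_dotProduct_nonneg v
      simpa [dotProduct_comm] using this
    have hineq : (1:ℝ) * (Real.sqrt (M *ᵥ (v ∘ Sum.inr) ⬝ᵥ (v ∘ Sum.inr))) ^ 2
        ≤ Real.sqrt (M *ᵥ u ⬝ᵥ u) * Real.sqrt (M *ᵥ (v ∘ Sum.inr) ⬝ᵥ (v ∘ Sum.inr)) := by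
      rw [Real.sq_sqrt (hqnonneg _)]
      have hcs := hMCS u (v ∘ Sum.inr)
      nlinarith [hid, hcs]
    have := auxStep _ _ _ (Real.sqrt_nonneg _) (Real.sqrt_nonneg _) one_pos hineq
    simpa using this
  -- geometric decay of interface errors
  set nM0 : ℝ := Real.sqrt (M *ᵥ (e₂ 0 ∘ Sum.inr) ⬝ᵥ (e₂ 0 ∘ Sum.inr)) with hnM0
  have hnM0nn : 0 ≤ nM0 := Real.sqrt_nonneg _
  have hP : ∀ m : ℕ,
      Real.sqrt (M *ᵥ (e₂ m ∘ Sum.inr) ⬝ᵥ (e₂ m ∘ Sum.inr)) ≤ r ^ m * nM0 := by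
    intro m
    induction m with
    | zero => simp [hnM0]
    | succ k ih =>
      have h1 : (1:ℕ) ≤ k + 1 := by omega
      have h2 : (k + 1) - 1 = k := by omega
      calc Real.sqrt (M *ᵥ (e₂ (k+1) ∘ Sum.inr) ⬝ᵥ (e₂ (k+1) ∘ Sum.inr))
          ≤ Real.sqrt (M *ᵥ (e₁ (k+1) ∘ Sum.inr) ⬝ᵥ (e₁ (k+1) ∘ Sum.inr)) := hS2 (k+1) h1
        _ ≤ r * Real.sqrt (M *ᵥ (e₂ ((k+1)-1) ∘ Sum.inr) ⬝ᵥ (e₂ ((k+1)-1) ∘ Sum.inr)) :=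
            hS1 (k+1) h1
        _ ≤ r * (r ^ k * nM0) := by
            rw [h2]; exact mul_le_mul_of_nonneg_left ih hr0.le
        _ = r ^ (k+1) * nM0 := by ring
  -- conclusion
  refine ⟨cN1 * cB + cN2 * cB + 1, by positivity, fun m hm => ?_⟩
  have h2 : m - 1 + 1 = m := Nat.succ_pred_eq_of_pos hm
  have hrm : (0:ℝ) ≤ r ^ (m-1) := pow_nonneg hr0.le _
  have hCle1 : cN1 * cB ≤ cN1 * cB + cN2 * cB + 1 := by nlinarith
  have hCle2 : cN2 * cB ≤ cN1 * cB + cN2 * cB + 1 := by nlinarith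
  constructor
  · calc Real.sqrt (e₁ m ⬝ᵥ e₁ m)
        ≤ cN1 * cB * Real.sqrt (M *ᵥ (e₂ (m-1) ∘ Sum.inr) ⬝ᵥ (e₂ (m-1) ∘ Sum.inr)) :=
          hnb1 m hm
      _ ≤ cN1 * cB * (r ^ (m-1) * nM0) :=
          mul_le_mul_of_nonneg_left (hP (m-1)) (by positivity)
      _ ≤ (cN1 * cB + cN2 * cB + 1) * (r ^ (m-1) * nM0) :=
          mul_le_mul_of_nonneg_right hCle1 (by positivity)
      _ = (cN1 * cB + cN2 * cB + 1) * r ^ (m-1) * nM0 := by ring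
  · calc Real.sqrt (e₂ m ⬝ᵥ e₂ m)
        ≤ cN2 * cB * Real.sqrt (M *ᵥ (e₁ m ∘ Sum.inr) ⬝ᵥ (e₁ m ∘ Sum.inr)) := hnb2 m hm
      _ ≤ cN2 * cB * (r * Real.sqrt (M *ᵥ (e₂ (m-1) ∘ Sum.inr) ⬝ᵥ (e₂ (m-1) ∘ Sum.inr))) :=
          mul_le_mul_of_nonneg_left (hS1 m hm) (by positivity)
      _ ≤ cN2 * cB * (r * (r ^ (m-1) * nM0)) := by
          apply mul_le_mul_of_nonneg_left _ (by positivity)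
          exact mul_le_mul_of_nonneg_left (hP (m-1)) hr0.le
      _ = cN2 * cB * (r ^ (m-1+1) * nM0) := by ring
      _ = cN2 * cB * (r ^ m * nM0) := by rw [h2]
      _ ≤ (cN1 * cB + cN2 * cB + 1) * (r ^ m * nM0) :=
          mul_le_mul_of_nonneg_right hCle2 (by positivity)
      _ = (cN1 * cB + cN2 * cB + 1) * r ^ m * nM0 := by ring
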